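/- Let Ω be the Cantor space {0,1}^ℕ equipped with the uniform fair-coin product probability measure P, let λ be Lebesgue measure on [0, ∞), and let ν = P ⊗ λ be the product measure on Ω × [0, ∞). Let (g_n)_{n≥1} be a sequence of measurable functions g_n : Ω × [0, ∞) → [0, ∞] such that C := Σ_{n≥1} ∫ g_n dν is finite. Then there exist a sequence of nonnegative reals (a_n)_{n≥1} with Σ_{n≥1} a_n < ∞ and a measurable set W ⊆ Ω × [0, ∞) with ν(W) < ∞ such that W contains every point z for which there exists N with Σ_{n ≥ N} g_n(z) > Σ_{n ≥ N} a_n. -/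

import Mathlib

open MeasureTheory
open scoped ENNReal NNReal

/-- Telescoping sum for antitone `ℝ≥0`-valued sequences (truncated subtraction). -/
lemma telescope_sum_nnreal (f : ℕ → ℝ≥0) (hf : Antitone f) (N M : ℕ) :
    ∑ i ∈ Finset.range M, (f (N + i) - f (N + i + 1)) = f N - f (N + M) := by
  apply NNReal.coe_injective
  rw [NNReal.coe_sub (hf (Nat.le_add_right N M)), NNReal.coe_sum]
  have h : ∀ i ∈ Finset.range M,
      ((f (N + i) - f (N + i + 1) : ℝ≥0) : ℝ) = (f (N + i) : ℝ) - f (N + i + 1) := by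
    intro i _
    exact NNReal.coe_sub (hf (Nat.le_succ _))
  rw [Finset.sum_congr rfl h]
  simpa [add_assoc] using Finset.sum_range_sub' (fun i => (f (N + i) : ℝ)) M

/-- Differences of an antitone `ℝ≥0`-valued sequence are summable. -/
lemma summable_telescope_nnreal (f : ℕ → ℝ≥0) (hf : Antitone f) :
    Summable (fun n => f n - f (n + 1)) := by
  rw [← NNReal.summable_coe]
  apply summable_of_sum_range_le (c := (f 0 : ℝ)) (fun n => (f n - f (n + 1)).coe_nonneg)
  intro M
  rw [← NNReal.coe_sum]
  have h := telescope_sum_nnreal f hf 0 M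
  simp only [Nat.zero_add] at h
  rw [h]
  exact_mod_cast tsub_le_self

/-- Measure-theoretic core of Lemma 4, on the infinite-measure space `Ω × [0,∞)` where
`Ω` is Cantor space with the uniform fair-coin measure `P` (characterized by assigning
measure `2^{-|x|}` to each cylinder `xΩ`) and `[0,∞)` carries Lebesgue measure: if
`C = Σ_n ∫ g n dν` is finite (`ν = P ⊗ λ`), then there are nonnegative reals `a n` with
`Σ_n a n < ∞` and a measurable set `W` of finite `ν`-measure containing every point `z`
for which some tail of `Σ_n g n z` exceeds the corresponding tail of `Σ_n a n`. -/
theorem slow_convergence_cover_cantor_halfline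
    (P : Measure (ℕ → Bool)) [IsProbabilityMeasure P]
    (hP : ∀ x : List Bool,
      P {ω | ∀ i : Fin x.length, ω ↑i = x.get i} = (1 / 2 : ℝ≥0∞) ^ x.length)
    (g : ℕ → (ℕ → Bool) × ℝ → ℝ≥0∞) (hg : ∀ n, Measurable (g n))
    (C : ℝ≥0∞)
    (hC : C = ∑' n, ∫⁻ z, g n z ∂(P.prod ((volume : Measure ℝ).restrict (Set.Ici 0))))
    (hCfin : C ≠ ⊤) :
    ∃ (a : ℕ → ℝ≥0) (W : Set ((ℕ → Bool) × ℝ)), MeasurableSet W ∧ Summable a ∧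
      (P.prod ((volume : Measure ℝ).restrict (Set.Ici 0))) W < ⊤ ∧
      ∀ z, (∃ N, (∑' n, (a (N + n) : ℝ≥0∞)) < ∑' n, g (N + n) z) → z ∈ W := by
  set ν := P.prod ((volume : Measure ℝ).restrict (Set.Ici 0)) with hν
  set c : ℕ → ℝ≥0∞ := fun n => ∫⁻ z, g n z ∂ν with hc
  have hCsum : ∑' n, c n = C := hC.symm
  set s : ℕ → ℝ≥0∞ := fun N => ∑' n, c (n + N) with hs
  have hsC : ∀ N, s N ≤ C := by
    intro N
    rw [← hCsum, ← Summable.sum_add_tsum_nat_add' (f := c) (k := N) ENNReal.summable]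
    exact le_add_self
  have hsfin : ∀ N, s N ≠ ⊤ := fun N => ne_top_of_le_ne_top hCfin (hsC N)
  have hsrec : ∀ N, s N = c N + s (N + 1) := by
    intro N
    have h0 : s N = ∑' n, (fun k => c (k + N)) n := rfl
    rw [h0, tsum_eq_zero_add' (f := fun k => c (k + N)) ENNReal.summable]
    simp only [Nat.zero_add]
    congr 1
    apply tsum_congr
    intro k
    congr 1
    omega
  have hcle : ∀ n, c n ≤ s n := fun n => (hsrec n) ▸ le_self_add
  have hcfin : ∀ n, c n ≠ ⊤ := fun n => ne_top_of_le_ne_top (hsfin n) (hcle n)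
  have hsanti : Antitone s := by
    apply antitone_nat_of_succ_le
    intro n
    rw [hsrec n]
    exact le_add_self
  set u : ℕ → ℝ≥0 := fun N => (s N).toNNReal with hu
  have huanti : Antitone u := fun m n h => ENNReal.toNNReal_mono (hsfin m) (hsanti h)
  set r : ℕ → ℝ≥0 := fun N => NNReal.sqrt (u N) with hr
  have hranti : Antitone r := fun m n h => NNReal.sqrt_le_sqrt.2 (huanti h)
  set T : ℕ → ℝ≥0 := fun N => r N + 2⁻¹ ^ N with hT
  have hpowanti : Antitone (fun N : ℕ => (2⁻¹ : ℝ≥0) ^ N) := by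
    apply antitone_nat_of_succ_le
    intro n
    rw [pow_succ]
    calc (2⁻¹ : ℝ≥0) ^ n * 2⁻¹ ≤ 2⁻¹ ^ n * 1 := by
          apply mul_le_mul_right
          rw [← NNReal.coe_le_coe]
          norm_num
      _ = 2⁻¹ ^ n := mul_one _
  have hTanti : Antitone T := fun m n h => add_le_add (hranti h) (hpowanti h)
  have hTpos : ∀ N, T N ≠ 0 := by
    intro N h
    have h2 : (2⁻¹ : ℝ≥0) ^ N = 0 := (add_eq_zero.1 h).2
    simp at h2
  -- `T` tends to `0`
  have hs0 : Filter.Tendsto s Filter.atTop (nhds 0) :=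
    ENNReal.tendsto_sum_nat_add c (hCsum ▸ hCfin)
  have hu0 : Filter.Tendsto u Filter.atTop (nhds 0) := by
    have hcont := ENNReal.tendsto_toNNReal (a := 0) (by simp)
    have h2 := hcont.comp hs0
    exact h2
  have hr0 : Filter.Tendsto r Filter.atTop (nhds 0) := by
    have h2 := (NNReal.continuous_sqrt.tendsto 0).comp hu0
    rw [NNReal.sqrt_zero] at h2
    exact h2
  have hT0 : Filter.Tendsto T Filter.atTop (nhds 0) := by
    have hp : Filter.Tendsto (fun N : ℕ => (2⁻¹ : ℝ≥0) ^ N) Filter.atTop (nhds 0) :=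
      NNReal.tendsto_pow_atTop_nhds_zero_of_lt_one
        (by rw [← NNReal.coe_lt_coe]; norm_num)
    have h2 := hr0.add hp
    rw [add_zero] at h2
    exact h2
  -- the sequence `a`
  set a : ℕ → ℝ≥0 := fun n => T n - T (n + 1) with ha
  have hasum : Summable a := summable_telescope_nnreal T hTanti
  -- tails of `a` dominate `T`
  have htail : ∀ N, (T N : ℝ≥0∞) ≤ ∑' n, (a (N + n) : ℝ≥0∞) := by
    intro N
    apply ENNReal.le_of_forall_pos_le_add
    intro ε hε _
    obtain ⟨M, hM⟩ := Filter.eventually_atTop.1 (hT0.eventually_lt_const hε)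
    have hTM : T (N + M) ≤ ε := (hM (N + M) (Nat.le_add_left M N)).le
    have hpart : ∑ i ∈ Finset.range M, (a (N + i) : ℝ≥0∞)
        = ((T N - T (N + M) : ℝ≥0) : ℝ≥0∞) := by
      rw [← ENNReal.coe_finset_sum, ENNReal.coe_inj]
      simp only [ha]
      exact telescope_sum_nnreal T hTanti N M
    calc (T N : ℝ≥0∞)
        ≤ ((T N - T (N + M) : ℝ≥0) : ℝ≥0∞) + (T (N + M) : ℝ≥0∞) := by
          exact_mod_cast le_tsub_add
      _ ≤ (∑' n, (a (N + n) : ℝ≥0∞)) + (ε : ℝ≥0∞) := by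
          apply add_le_add
          · rw [← hpart]
            exact ENNReal.sum_le_tsum (Finset.range M)
          · exact_mod_cast hTM
  -- the set `W`
  set F : (ℕ → Bool) × ℝ → ℝ≥0∞ := fun z => ∑' n, g n z * ((T n : ℝ≥0∞))⁻¹ with hF
  have hFmeas : Measurable F := Measurable.ennreal_tsum fun n => (hg n).mul_const _
  refine ⟨a, {z | 1 < F z}, measurableSet_lt measurable_const hFmeas, hasum, ?_, ?_⟩
  · -- finite measure
    have hkey : ∀ n, c n * ((T n : ℝ≥0∞))⁻¹ ≤ ((2 * (r n - r (n + 1)) : ℝ≥0) : ℝ≥0∞) := by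
      intro n
      by_cases hc0 : c n = 0
      · simp [hc0]
      · have hq : r (n + 1) ≤ r n := hranti (Nat.le_succ n)
        have hγ : u n = (c n).toNNReal + u (n + 1) := by
          have h2 := congrArg ENNReal.toNNReal (hsrec n)
          rwa [ENNReal.toNNReal_add (hcfin n) (hsfin _)] at h2
        have e1 : ((r n : ℝ)) ^ 2 = (u n : ℝ) := by
          rw [hr]
          exact_mod_cast congrArg NNReal.toReal (NNReal.sq_sqrt (u n))
        have e2 : ((r (n + 1) : ℝ)) ^ 2 = (u (n + 1) : ℝ) := by
          rw [hr]
          exact_mod_cast congrArg NNReal.toReal (NNReal.sq_sqrt (u (n + 1)))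
        have hγle : (c n).toNNReal ≤ 2 * (r n - r (n + 1)) * r n := by
          rw [← NNReal.coe_le_coe]
          have e3 : (u n : ℝ) = ((c n).toNNReal : ℝ) + (u (n + 1) : ℝ) := by
            exact_mod_cast congrArg NNReal.toReal hγ
          push_cast [NNReal.coe_sub hq] at e3 ⊢
          nlinarith [sq_nonneg ((r n : ℝ) - (r (n + 1) : ℝ))]
        have hrne : r n ≠ 0 := by
          intro h0
          apply hc0
          have hu0' : u n = 0 := by
            have := h0
            rw [hr] at this
            exact NNReal.sqrt_eq_zero.1 this
          have hcn0 : (c n).toNNReal = 0 := by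
            have h3 := hγ
            rw [hu0'] at h3
            exact (add_eq_zero.1 h3.symm).1
          rw [← ENNReal.coe_toNNReal (hcfin n), hcn0]
          rfl
        have hcc : c n = ((c n).toNNReal : ℝ≥0∞) := (ENNReal.coe_toNNReal (hcfin n)).symm
        calc c n * ((T n : ℝ≥0∞))⁻¹
            ≤ ((2 * (r n - r (n + 1)) * r n : ℝ≥0) : ℝ≥0∞) * ((r n : ℝ≥0∞))⁻¹ := by
              apply mul_le_mul'
              · rw [hcc]
                exact_mod_cast hγle
              · apply ENNReal.inv_le_inv.2
                exact_mod_cast le_self_add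
          _ = ((2 * (r n - r (n + 1)) : ℝ≥0) : ℝ≥0∞) := by
              rw [ENNReal.coe_mul, mul_assoc,
                ENNReal.mul_inv_cancel (by exact_mod_cast hrne) ENNReal.coe_ne_top, mul_one]
    have hbsum : Summable (fun n => 2 * (r n - r (n + 1))) :=
      (summable_telescope_nnreal r hranti).mul_left 2
    calc ν {z | 1 < F z}
        ≤ ν {z | 1 ≤ F z} := by
          apply measure_mono
          intro z hz
          simp only [Set.mem_setOf_eq] at hz ⊢
          exact hz.le
      _ = 1 * ν {z | 1 ≤ F z} := (one_mul _).symm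
      _ ≤ ∫⁻ z, F z ∂ν := mul_meas_ge_le_lintegral₀ hFmeas.aemeasurable 1
      _ = ∑' n, c n * ((T n : ℝ≥0∞))⁻¹ := by
          simp only [hF]
          rw [lintegral_tsum (fun n => ((hg n).mul_const _).aemeasurable)]
          exact tsum_congr fun n => lintegral_mul_const _ (hg n)
      _ ≤ ∑' n, ((2 * (r n - r (n + 1)) : ℝ≥0) : ℝ≥0∞) :=
          Summable.tsum_le_tsum hkey ENNReal.summable ENNReal.summable
      _ = ((∑' n, 2 * (r n - r (n + 1)) : ℝ≥0) : ℝ≥0∞) := (ENNReal.coe_tsum hbsum).symm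
      _ < ⊤ := ENNReal.coe_lt_top
  · -- covering property
    rintro z ⟨N, hN⟩
    have h1 : (T N : ℝ≥0∞) < ∑' n, g (N + n) z := lt_of_le_of_lt (htail N) hN
    have h2 : 1 < (∑' n, g (N + n) z) * ((T N : ℝ≥0∞))⁻¹ := by
      rw [← div_eq_mul_inv,
        ENNReal.lt_div_iff_mul_lt (Or.inl (by exact_mod_cast hTpos N))
          (Or.inl ENNReal.coe_ne_top)]
      simpa using h1
    have h3 : (∑' n, g (N + n) z) * ((T N : ℝ≥0∞))⁻¹ ≤ F z := by
      calc (∑' n, g (N + n) z) * ((T N : ℝ≥0∞))⁻¹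
          = ∑' n, g (N + n) z * ((T N : ℝ≥0∞))⁻¹ := ENNReal.tsum_mul_right.symm
        _ ≤ ∑' n, g (N + n) z * ((T (N + n) : ℝ≥0∞))⁻¹ := by
            apply Summable.tsum_le_tsum _ ENNReal.summable ENNReal.summable
            intro n
            apply mul_le_mul_right
            apply ENNReal.inv_le_inv.2
            exact_mod_cast hTanti (Nat.le_add_right N n)
        _ = ∑' n, g (n + N) z * ((T (n + N) : ℝ≥0∞))⁻¹ :=
            tsum_congr fun n => by rw [Nat.add_comm]
        _ ≤ F z := by
            simp only [hF]
            rw [← Summable.sum_add_tsum_nat_add'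
              (f := fun n => g n z * ((T n : ℝ≥0∞))⁻¹) (k := N) ENNReal.summable]
            exact le_add_self
    exact lt_of_lt_of_le h2 h3
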